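/- For every μ > 0 and every ε ≥ 0, the function δ(ε) = Φ(−ε/μ + μ/2) − e^ε·Φ(−ε/μ − μ/2) satisfies 0 ≤ δ(ε) ≤ 1, and δ is non-increasing in ε with δ(ε) → 0 as ε → ∞. -/

import Mathlib

open MeasureTheory ProbabilityTheory Real Set

/-- Standard normal CDF. -/
noncomputable def Phi (x : ℝ) : ℝ := ((gaussianReal 0 1) (Set.Iic x)).toReal

/-- Inverse of the standard normal CDF (on (0,1)). -/
noncomputable def PhiInv (p : ℝ) : ℝ := sInf {x : ℝ | p ≤ Phi x}

/-- Gaussian tradeoff function `G_μ`, extended by `G_μ(0)=1`, `G_μ(1)=0`. -/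
noncomputable def Gmu (μ α : ℝ) : ℝ :=
  if α ≤ 0 then 1 else if 1 ≤ α then 0 else Phi (PhiInv (1 - α) - μ)

/-- Optimal hypothesis-testing tradeoff function: minimal type-II error over
randomized tests with type-I error at most `α`. -/
noncomputable def tradeoff {Ω : Type*} [MeasurableSpace Ω] (P Q : Measure Ω) (α : ℝ) : ℝ :=
  sInf { b : ℝ | ∃ φ : Ω → ℝ, Measurable φ ∧ (∀ ω, φ ω ∈ Set.Icc (0:ℝ) 1) ∧
    (∫ ω, φ ω ∂P) ≤ α ∧ b = 1 - ∫ ω, φ ω ∂Q }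

/-- Rényi divergence of order `a > 1`. -/
noncomputable def renyiDiv {Ω : Type*} [MeasurableSpace Ω] (a : ℝ) (P Q : Measure Ω) : ℝ :=
  (a - 1)⁻¹ * Real.log (∫ ω, ((Measure.rnDeriv P Q ω).toReal) ^ a ∂Q)

/-- `(ε,δ)`-differential privacy. -/
def IsDP {X Ω : Type*} [MeasurableSpace Ω] (M : X → Measure Ω) (Neighbor : X → X → Prop)
    (ε δ : ℝ) : Prop :=
  ∀ x x', Neighbor x x' → ∀ S : Set Ω, MeasurableSet S →
    ((M x) S).toReal ≤ Real.exp ε * ((M x') S).toReal + δ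

/-- `ρ`-zero-concentrated differential privacy. -/
def IsZCDP {X Ω : Type*} [MeasurableSpace Ω] (M : X → Measure Ω) (Neighbor : X → X → Prop)
    (ρ : ℝ) : Prop :=
  ∀ x x', Neighbor x x' → ∀ a : ℝ, 1 < a → renyiDiv a (M x) (M x') ≤ ρ * a

/-- `μ`-Gaussian differential privacy. -/
def IsGDP {X Ω : Type*} [MeasurableSpace Ω] (M : X → Measure Ω) (Neighbor : X → X → Prop)
    (μ : ℝ) : Prop :=
  ∀ x x', Neighbor x x' → ∀ α ∈ Set.Icc (0:ℝ) 1, Gmu μ α ≤ tradeoff (M x) (M x') α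

/-! ### Auxiliary lemmas -/

/-- `Phi` as a set integral of the standard gaussian density. -/
lemma Phi_eq_integral (x : ℝ) : Phi x = ∫ t in Set.Iic x, gaussianPDFReal 0 1 t := by
  rw [Phi, gaussianReal_apply_eq_integral 0 one_ne_zero, ENNReal.toReal_ofReal]
  exact integral_nonneg (fun t => gaussianPDFReal_nonneg 0 1 t)

lemma Phi_nonneg (x : ℝ) : 0 ≤ Phi x := ENNReal.toReal_nonneg

lemma Phi_le_one (x : ℝ) : Phi x ≤ 1 := by
  rw [Phi]
  exact ENNReal.toReal_le_of_le_ofReal zero_le_one (by simpa using prob_le_one)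

/-- The key density ratio identity. -/
lemma density_ratio (μ ε t : ℝ) :
    Real.exp ε * gaussianPDFReal 0 1 (t - μ) =
      gaussianPDFReal 0 1 t * Real.exp (ε + μ * t - μ ^ 2 / 2) := by
  simp only [gaussianPDFReal, NNReal.coe_one, mul_one, sub_zero]
  rw [mul_left_comm, ← Real.exp_add, mul_assoc, ← Real.exp_add]
  congr 1
  ring_nf

/-- Positive-part integrand. -/
noncomputable def posP (μ ε t : ℝ) : ℝ :=
  max (gaussianPDFReal 0 1 t - Real.exp ε * gaussianPDFReal 0 1 (t - μ)) 0

lemma posP_nonneg (μ ε t : ℝ) : 0 ≤ posP μ ε t := le_max_right _ _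

lemma posP_le (μ ε t : ℝ) : posP μ ε t ≤ gaussianPDFReal 0 1 t := by
  rw [posP]
  refine max_le ?_ (gaussianPDFReal_nonneg 0 1 t)
  have : 0 ≤ Real.exp ε * gaussianPDFReal 0 1 (t - μ) :=
    mul_nonneg (Real.exp_nonneg ε) (gaussianPDFReal_nonneg 0 1 (t - μ))
  linarith

lemma posP_measurable (μ ε : ℝ) : Measurable (posP μ ε) := by
  apply Measurable.max _ measurable_const
  exact (measurable_gaussianPDFReal 0 1).sub
    (((measurable_gaussianPDFReal 0 1).comp (measurable_id.sub_const μ)).const_mul _)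

lemma posP_integrable (μ ε : ℝ) : Integrable (posP μ ε) := by
  refine Integrable.mono' (integrable_gaussianPDFReal 0 1)
    (posP_measurable μ ε).aestronglyMeasurable (Filter.Eventually.of_forall fun t => ?_)
  rw [Real.norm_eq_abs, abs_of_nonneg (posP_nonneg μ ε t)]
  exact posP_le μ ε t

lemma posP_antitone (μ : ℝ) {ε₁ ε₂ : ℝ} (h : ε₁ ≤ ε₂) (t : ℝ) :
    posP μ ε₂ t ≤ posP μ ε₁ t := by
  apply max_le_max _ le_rfl
  have := mul_le_mul_of_nonneg_right (Real.exp_le_exp.2 h) (gaussianPDFReal_nonneg 0 1 (t - μ))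
  linarith

/-- Sign analysis of the integrand. -/
lemma posP_eq_indicator (μ : ℝ) (hμ : 0 < μ) (ε : ℝ) :
    posP μ ε = (Set.Iic (-ε / μ + μ / 2)).indicator
      (fun t => gaussianPDFReal 0 1 t - Real.exp ε * gaussianPDFReal 0 1 (t - μ)) := by
  funext t
  have hratio := density_ratio μ ε t
  have hg : 0 < gaussianPDFReal 0 1 t := gaussianPDFReal_pos 0 1 t one_ne_zero
  by_cases ht : t ∈ Set.Iic (-ε / μ + μ / 2)
  · rw [Set.indicator_of_mem ht, posP, max_eq_left]
    rw [hratio, sub_nonneg]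
    calc gaussianPDFReal 0 1 t * Real.exp (ε + μ * t - μ ^ 2 / 2)
        ≤ gaussianPDFReal 0 1 t * 1 := by
          apply mul_le_mul_of_nonneg_left _ hg.le
          rw [← Real.exp_zero, Real.exp_le_exp]
          have h1 : μ * t ≤ μ * (-ε / μ + μ / 2) := mul_le_mul_of_nonneg_left ht hμ.le
          have h2 : μ * (-ε / μ + μ / 2) = -ε + μ ^ 2 / 2 := by field_simp
          linarith
      _ = gaussianPDFReal 0 1 t := mul_one _
  · rw [Set.indicator_of_notMem ht, posP, max_eq_right]
    rw [hratio, sub_nonpos]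
    calc gaussianPDFReal 0 1 t = gaussianPDFReal 0 1 t * 1 := (mul_one _).symm
      _ ≤ gaussianPDFReal 0 1 t * Real.exp (ε + μ * t - μ ^ 2 / 2) := by
          apply mul_le_mul_of_nonneg_left _ hg.le
          rw [← Real.exp_zero, Real.exp_le_exp]
          have h1 : μ * (-ε / μ + μ / 2) ≤ μ * t :=
            mul_le_mul_of_nonneg_left (lt_of_not_ge ht).le hμ.le
          have h2 : μ * (-ε / μ + μ / 2) = -ε + μ ^ 2 / 2 := by field_simp
          linarith

/-- The δ-curve as an integral of a positive part. -/
lemma delta_eq_integral (μ : ℝ) (hμ : 0 < μ) (ε : ℝ) :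
    Phi (-ε / μ + μ / 2) - Real.exp ε * Phi (-ε / μ - μ / 2) = ∫ t, posP μ ε t := by
  set a := -ε / μ + μ / 2 with ha
  have h1 : ∫ t, posP μ ε t =
      ∫ t in Set.Iic a, (gaussianPDFReal 0 1 t - Real.exp ε * gaussianPDFReal 0 1 (t - μ)) := by
    rw [posP_eq_indicator μ hμ ε, integral_indicator measurableSet_Iic]
  have hgint : Integrable (fun t => gaussianPDFReal 0 1 t) (volume.restrict (Set.Iic a)) :=
    (integrable_gaussianPDFReal 0 1).restrict
  have hgint2 : Integrable (fun t => Real.exp ε * gaussianPDFReal 0 1 (t - μ))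
      (volume.restrict (Set.Iic a)) :=
    (((integrable_gaussianPDFReal 0 1).comp_sub_right μ).restrict).const_mul _
  rw [h1, integral_sub hgint hgint2, integral_const_mul _ _]
  have h2 : ∫ t in Set.Iic a, gaussianPDFReal 0 1 (t - μ) =
      ∫ t in Set.Iic (a - μ), gaussianPDFReal 0 1 t := by
    rw [← integral_indicator measurableSet_Iic, ← integral_indicator measurableSet_Iic]
    have : (Set.Iic a).indicator (fun t => gaussianPDFReal 0 1 (t - μ)) =
        fun t => (Set.Iic (a - μ)).indicator (gaussianPDFReal 0 1) (t - μ) := by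
      funext t
      simp only [Set.indicator, Set.mem_Iic]
      by_cases ht : t ≤ a
      · rw [if_pos ht, if_pos (by linarith)]
      · rw [if_neg ht, if_neg (fun h => ht (by linarith))]
    rw [this, integral_sub_right_eq_self _ μ]
  rw [h2, ← Phi_eq_integral, ← Phi_eq_integral]
  have : a - μ = -ε / μ - μ / 2 := by rw [ha]; ring
  rw [this]

/-- The `(ε,δ)`-curve of a `μ`-GDP mechanism: `δ(ε) ∈ [0,1]`, `δ` is
non-increasing on `[0,∞)`, and `δ(ε) → 0` as `ε → ∞`. -/
theorem delta_curve_properties (μ : ℝ) (hμ : 0 < μ) :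
    (∀ ε : ℝ, 0 ≤ ε →
      0 ≤ Phi (-ε / μ + μ / 2) - Real.exp ε * Phi (-ε / μ - μ / 2) ∧
      Phi (-ε / μ + μ / 2) - Real.exp ε * Phi (-ε / μ - μ / 2) ≤ 1) ∧
    AntitoneOn (fun ε : ℝ => Phi (-ε / μ + μ / 2) - Real.exp ε * Phi (-ε / μ - μ / 2))
      (Set.Ici 0) ∧
    Filter.Tendsto (fun ε : ℝ => Phi (-ε / μ + μ / 2) - Real.exp ε * Phi (-ε / μ - μ / 2))
      Filter.atTop (nhds 0) := by
  have hnonneg : ∀ ε : ℝ, 0 ≤ Phi (-ε / μ + μ / 2) - Real.exp ε * Phi (-ε / μ - μ / 2) := by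
    intro ε
    rw [delta_eq_integral μ hμ ε]
    exact integral_nonneg (posP_nonneg μ ε)
  have hub : ∀ ε : ℝ, Phi (-ε / μ + μ / 2) - Real.exp ε * Phi (-ε / μ - μ / 2) ≤
      Phi (-ε / μ + μ / 2) := by
    intro ε
    have : 0 ≤ Real.exp ε * Phi (-ε / μ - μ / 2) :=
      mul_nonneg (Real.exp_nonneg ε) (Phi_nonneg _)
    linarith
  refine ⟨fun ε _ => ⟨hnonneg ε, (hub ε).trans (Phi_le_one _)⟩, ?_, ?_⟩
  · intro ε₁ _ ε₂ _ h
    simp only [delta_eq_integral μ hμ]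
    exact integral_mono (posP_integrable μ ε₂) (posP_integrable μ ε₁)
      (posP_antitone μ h)
  · have hPhi : Filter.Tendsto Phi Filter.atBot (nhds 0) := by
      have h1 : Filter.Tendsto (fun x : ℝ => (gaussianReal 0 1) (Set.Iic x)) Filter.atBot
          (nhds ((gaussianReal 0 1) (⋂ x : ℝ, Set.Iic x))) :=
        tendsto_measure_iInter_atBot
          (fun x => measurableSet_Iic.nullMeasurableSet) (fun _ _ h => Iic_subset_Iic.2 h)
          ⟨0, measure_ne_top _ _⟩
      have h2 : (⋂ x : ℝ, Set.Iic x) = (∅ : Set ℝ) := by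
        apply Set.eq_empty_iff_forall_notMem.2
        intro y hy
        have := Set.mem_iInter.1 hy (y - 1)
        simp only [Set.mem_Iic] at this
        linarith
      rw [h2, measure_empty] at h1
      have := (ENNReal.tendsto_toReal ENNReal.zero_ne_top).comp h1
      exact (by simpa using this : Filter.Tendsto (ENNReal.toReal ∘ fun x : ℝ => (gaussianReal 0 1) (Set.Iic x)) Filter.atBot (nhds 0))
    have harg : Filter.Tendsto (fun ε : ℝ => -ε / μ + μ / 2) Filter.atTop Filter.atBot := by
      apply Filter.tendsto_atBot_add_const_right
      simp_rw [neg_div]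
      exact Filter.tendsto_neg_atTop_atBot.comp
        (Filter.Tendsto.atTop_div_const hμ Filter.tendsto_id)
    apply tendsto_of_tendsto_of_tendsto_of_le_of_le tendsto_const_nhds
      (hPhi.comp harg) (fun ε => hnonneg ε) (fun ε => hub ε)
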